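/- For any fixed k ≥ 3, every labeled graph G = ([n], E) is 1^k-representable, i.e., there exists a word w over [n] in which every letter of [n] occurs and such that for all distinct x, y in [n], xy is an edge of G if and only if the word w_{{x,y}} contains no k consecutive equal letters. -/

import Mathlib

/-- `red w` replaces each occurrence of the `i`-th smallest letter of `w` by `i`. -/
def red (w : List ℕ) : List ℕ :=
  w.map (fun x => (w.toFinset.filter (· < x)).card + 1)

/-- `w` has a `u`-match (starting at some position `i`): a factor of `w` of length `|u|`
whose reduction equals `red u` (which is `u` itself when `red u = u`). -/
def HasMatch (u w : List ℕ) : Prop :=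
  ∃ i, i + u.length ≤ w.length ∧ red ((w.drop i).take u.length) = red u

/-- The word `w` `u`-represents the labeled graph with vertex set `V` and adjacency `E`:
the letters occurring in `w` are exactly `V`, and two distinct vertices are adjacent
iff `w` restricted to these two letters has no `u`-match. -/
def Represents (u w : List ℕ) (V : Finset ℕ) (E : ℕ → ℕ → Prop) : Prop :=
  (∀ x, x ∈ w ↔ x ∈ V) ∧
  ∀ x ∈ V, ∀ y ∈ V, x ≠ y →
    (E x y ↔ ¬ HasMatch u (w.filter (fun z => z = x ∨ z = y)))

open List

lemma red_replicate {k c : ℕ} (hk : 1 ≤ k) :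
    red (List.replicate k c) = List.replicate k 1 := by
  unfold red
  rw [List.map_replicate, List.toFinset_replicate_of_ne_zero (by omega)]
  congr 1
  have : ({c} : Finset ℕ).filter (· < c) = ∅ := by
    ext t; simp; omega
  rw [this]; simp

lemma red_eq_rep {l : List ℕ} {k : ℕ} (h : red l = List.replicate k 1) :
    ∃ c, l = List.replicate k c := by
  have hlen : l.length = k := by
    have := congrArg List.length h; simpa [red] using this
  have hval : ∀ x ∈ l, (l.toFinset.filter (· < x)).card = 0 := by
    intro x hx
    have hmem : ((l.toFinset.filter (· < x)).card + 1) ∈ List.replicate k 1 := by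
      rw [← h]; exact List.mem_map_of_mem hx
    have := List.eq_of_mem_replicate hmem
    omega
  have hkey : ∀ x ∈ l, ∀ a ∈ l, ¬ a < x := by
    intro x hx a ha hax
    have h0 := hval x hx
    have : a ∈ l.toFinset.filter (· < x) := by
      simp [List.mem_toFinset, ha, hax]
    rw [Finset.card_eq_zero.mp h0] at this
    simp at this
  rcases l with _ | ⟨c, l'⟩
  · exact ⟨0, by simp [← hlen]⟩
  · refine ⟨c, ?_⟩
    rw [List.eq_replicate_iff]
    refine ⟨hlen, fun b hb => ?_⟩
    have h1 := hkey b hb c (by simp)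
    have h2 := hkey c (by simp) b hb
    omega

lemma hasMatch_iff {k : ℕ} (hk : 1 ≤ k) (v : List ℕ) :
    HasMatch (List.replicate k 1) v ↔ ∃ c, List.replicate k c <:+: v := by
  constructor
  · rintro ⟨i, hlen, hred⟩
    rw [List.length_replicate] at hlen hred
    rw [red_replicate hk] at hred
    obtain ⟨c, hc⟩ := red_eq_rep hred
    refine ⟨c, ?_⟩
    rw [← hc]
    exact (List.take_prefix _ _).isInfix.trans (List.drop_suffix i v).isInfix
  · rintro ⟨c, s, t, rfl⟩
    refine ⟨s.length, ?_, ?_⟩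
    · simp
    · rw [List.length_replicate, List.append_assoc, List.drop_left,
        List.take_left' (by simp), red_replicate hk, red_replicate hk]

lemma infix_split {u A B : List ℕ} (h : u <:+: A ++ B) :
    u <:+: A ∨ u <:+: B ∨ ∃ u1 u2, u = u1 ++ u2 ∧ u1 <:+ A ∧ u2 <+: B := by
  obtain ⟨s, t, hst⟩ := h
  rw [List.append_assoc] at hst
  rcases List.append_eq_append_iff.mp hst with ⟨a', ha1, ha2⟩ | ⟨c', hc1, hc2⟩
  · rcases List.append_eq_append_iff.mp ha2 with ⟨e, he1, he2⟩ | ⟨e, he1, he2⟩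
    · exact Or.inl ⟨s, e, by rw [ha1, he1, List.append_assoc]⟩
    · exact Or.inr (Or.inr ⟨a', e, he1, ⟨s, ha1.symm⟩, ⟨t, he2.symm⟩⟩)
  · exact Or.inr (Or.inl ⟨c', t, by rw [hc2, List.append_assoc]⟩)

def Piece (k c : ℕ) (P : List ℕ) : Prop :=
  (∃ d ∈ P, d ≠ c) ∧ ¬([c,c] <+: P) ∧ ¬([c,c] <:+ P) ∧ ¬(List.replicate k c <:+: P)

lemma no_cc_prefix_flatten {c : ℕ} {L : List (List ℕ)}
    (h : ∀ P ∈ L, (∃ d ∈ P, d ≠ c) ∧ ¬([c,c] <+: P)) : ¬([c,c] <+: L.flatten) := by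
  induction L with
  | nil => intro hp; have := hp.length_le; simp at this
  | cons P L' ih =>
    intro hp
    rw [List.flatten_cons] at hp
    obtain ⟨⟨d, hd, hdc⟩, hP⟩ := h P (by simp)
    rcases P with _ | ⟨d1, P'⟩
    · simp at hd
    rcases P' with _ | ⟨d2, rest⟩
    · obtain ⟨t, ht⟩ := hp
      simp at ht hd
      subst hd
      exact hdc ht.1.symm
    · obtain ⟨t, ht⟩ := hp
      simp at ht
      exact hP ⟨rest, by rw [← ht.1, ← ht.2.1]; rfl⟩

lemma cc_prefix_replicate {c m : ℕ} (hm : 2 ≤ m) : [c,c] <+: List.replicate m c :=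
  ⟨List.replicate (m-2) c, by
    have : [c,c] = List.replicate 2 c := rfl
    rw [this, ← List.replicate_add]; congr 1; omega⟩

lemma cc_suffix_replicate {c m : ℕ} (hm : 2 ≤ m) : [c,c] <:+ List.replicate m c :=
  ⟨List.replicate (m-2) c, by
    have : [c,c] = List.replicate 2 c := rfl
    rw [this, ← List.replicate_add]; congr 1; omega⟩

lemma rep_of_append_rep {u1 u2 : List ℕ} {k c : ℕ} (h : u1 ++ u2 = List.replicate k c) :
    u1 = List.replicate u1.length c ∧ u2 = List.replicate u2.length c := by
  constructor
  · rw [List.eq_replicate_iff]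
    exact ⟨rfl, fun b hb => List.eq_of_mem_replicate (h ▸ List.mem_append_left _ hb)⟩
  · rw [List.eq_replicate_iff]
    exact ⟨rfl, fun b hb => List.eq_of_mem_replicate (h ▸ List.mem_append_right _ hb)⟩

lemma no_rep_flatten {k c : ℕ} (hk : 3 ≤ k) {L : List (List ℕ)}
    (hall : ∀ P ∈ L, Piece k c P) : ¬(List.replicate k c <:+: L.flatten) := by
  induction L with
  | nil =>
    intro h
    have := h.sublist.length_le
    simp at this
    omega
  | cons P L' ih =>
    intro h
    rw [List.flatten_cons] at h
    rcases infix_split h with h1 | h2 | ⟨u1, u2, hu, hs, hp⟩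
    · exact (hall P (by simp)).2.2.2 h1
    · exact ih (fun Q hQ => hall Q (by simp [hQ])) h2
    · obtain ⟨hr1, hr2⟩ := rep_of_append_rep hu.symm
      have hlen : u1.length + u2.length = k := by
        have := congrArg List.length hu; simp at this; omega
      have h1 : u1.length ≤ 1 := by
        by_contra hgt
        exact (hall P (by simp)).2.2.1
          (((cc_suffix_replicate (by omega)).trans (hr1 ▸ hs)))
      have h2 : u2.length ≤ 1 := by
        by_contra hgt
        exact no_cc_prefix_flatten
          (fun Q hQ => ⟨(hall Q (by simp [hQ])).1, (hall Q (by simp [hQ])).2.1⟩)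
          ((cc_prefix_replicate (by omega)).trans (hr2 ▸ hp))
      omega

lemma chain'_ne_cons_flatten {x z : ℕ} (hxz : x ≠ z) :
    ∀ m, List.Chain' (· ≠ ·) (x :: (List.replicate m [z,x]).flatten)
  | 0 => by exact List.isChain_singleton _
  | (m+1) => by
    rw [List.replicate_succ, List.flatten_cons]
    exact List.isChain_cons_cons.mpr ⟨hxz, List.isChain_cons_cons.mpr ⟨hxz.symm, chain'_ne_cons_flatten hxz m⟩⟩

lemma flatten_rep_pair_eq {x z : ℕ} :
    ∀ m, (List.replicate m [x,z]).flatten ++ [x] = x :: (List.replicate m [z,x]).flatten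
  | 0 => by simp
  | (m+1) => by
    rw [List.replicate_succ, List.flatten_cons, List.replicate_succ (n := m), List.flatten_cons]
    simp only [List.cons_append, List.append_assoc]
    rw [flatten_rep_pair_eq m]
    rfl

lemma chain'_alt {x z : ℕ} (hxz : x ≠ z) (m : ℕ) :
    List.Chain' (· ≠ ·) ((List.replicate m [x,z]).flatten ++ [x]) := by
  rw [flatten_rep_pair_eq]
  exact chain'_ne_cons_flatten hxz m

lemma chain'_alt' {x z : ℕ} (hxz : x ≠ z) (m : ℕ) :
    List.Chain' (· ≠ ·) ((List.replicate m [x,z]).flatten) :=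
  (chain'_alt hxz m).prefix (List.prefix_append _ _)

lemma cc_infix_of_rep_infix {k c : ℕ} (hk : 2 ≤ k) {P : List ℕ}
    (h : List.replicate k c <:+: P) : [c,c] <:+: P :=
  ((cc_prefix_replicate hk).isInfix).trans h

lemma piece_of_chain' {k c : ℕ} (hk : 2 ≤ k) {P : List ℕ} (hch : List.Chain' (· ≠ ·) P)
    (hd : ∃ d ∈ P, d ≠ c) : Piece k c P := by
  have hcc : ¬([c,c] <:+: P) := by
    intro h
    have := hch.infix h
    rw [List.isChain_cons_cons] at this
    exact this.1 rfl
  exact ⟨hd, fun h => hcc h.isInfix, fun h => hcc h.isInfix,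
    fun h => hcc (cc_infix_of_rep_infix hk h)⟩

lemma flatten_rep_singleton (z : ℕ) : ∀ m, (List.replicate m [z]).flatten = List.replicate m z
  | 0 => by simp
  | (m+1) => by
    rw [List.replicate_succ, List.flatten_cons, List.replicate_succ, flatten_rep_singleton z m]
    rfl

/-- The letters `1..n` other than `x` and `y`. -/
def gadZ (n x y : ℕ) : List ℕ := (List.range' 1 n).filter (fun z => z ≠ x ∧ z ≠ y)

/-- Gadget forcing a `1^k`-match for the (non-adjacent) pair `{x,y}`. -/
def gad (k n x y : ℕ) : List ℕ :=
  y :: ((List.replicate (k-1) (x :: gadZ n x y)).flatten ++ [x, y])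

/-- The representing word. -/
def word (k n : ℕ) (ps : List (ℕ × ℕ)) : List ℕ :=
  List.range' 1 n ++ (ps.map (fun q => gad k n q.1 q.2)).flatten

lemma filter_eq_single {b : ℕ} : ∀ {l : List ℕ}, b ∈ l → l.Nodup →
    l.filter (fun t => decide (t = b)) = [b]
  | [], h, _ => by simp at h
  | d :: l', h, hnd => by
    rcases List.mem_cons.mp h with rfl | hbl
    · rw [List.filter_cons_of_pos (by simp)]
      have : l'.filter (fun t => decide (t = b)) = [] := by
        rw [List.filter_eq_nil_iff]
        intro a ha
        simp only [decide_eq_true_eq]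
        rintro rfl
        exact (List.nodup_cons.mp hnd).1 ha
      rw [this]
    · rw [List.filter_cons_of_neg (by simp; rintro rfl; exact (List.nodup_cons.mp hnd).1 hbl)]
      exact filter_eq_single hbl (List.nodup_cons.mp hnd).2

lemma filter_pair {a b : ℕ} (hab : a ≠ b) : ∀ {l : List ℕ}, a ∈ l → b ∈ l → l.Nodup →
    l.filter (fun t => decide (t = a ∨ t = b)) = [a,b] ∨
    l.filter (fun t => decide (t = a ∨ t = b)) = [b,a]
  | [], ha, _, _ => by simp at ha
  | d :: l', ha, hb, hnd => by
    have hnd' := List.nodup_cons.mp hnd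
    rcases List.mem_cons.mp ha with rfl | ha'
    · left
      rw [List.filter_cons_of_pos (by simp)]
      have hb' : b ∈ l' := by rcases List.mem_cons.mp hb with rfl | h; exact absurd rfl hab; exact h
      have : l'.filter (fun t => decide (t = a ∨ t = b)) = l'.filter (fun t => decide (t = b)) := by
        apply List.filter_congr
        intro t ht
        simp only [decide_eq_decide]
        constructor
        · rintro (rfl | rfl); exact absurd ht hnd'.1; rfl
        · exact Or.inr
      rw [this, filter_eq_single hb' hnd'.2]
    rcases List.mem_cons.mp hb with rfl | hb'
    · right
      rw [List.filter_cons_of_pos (by simp)]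
      have ha2 : a ∈ l' := ha'
      have : l'.filter (fun t => decide (t = a ∨ t = b)) = l'.filter (fun t => decide (t = a)) := by
        apply List.filter_congr
        intro t ht
        simp only [decide_eq_decide]
        constructor
        · rintro (rfl | rfl); rfl; exact absurd ht hnd'.1
        · exact Or.inl
      rw [this, filter_eq_single ha2 hnd'.2]
    · have hd : ¬(d = a ∨ d = b) := by rintro (rfl | rfl); exact hnd'.1 ha'; exact hnd'.1 hb'
      rw [List.filter_cons_of_neg (by simpa using hd)]
      exact filter_pair hab ha' hb' hnd'.2

lemma piece_yzy {k c y z : ℕ} (hk : 3 ≤ k) (hyz : y ≠ z) :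
    Piece k c (y :: (List.replicate (k-1) z ++ [y])) := by
  obtain ⟨m, hm⟩ : ∃ m, k - 1 = m + 1 := ⟨k - 2, by omega⟩
  have hpre : ∀ (l : List ℕ), ¬([c,c] <+: y :: z :: l) := by
    rintro l ⟨t, ht⟩
    simp at ht
    exact hyz (ht.1.symm.trans ht.2.1)
  have hrev : (y :: (List.replicate (k-1) z ++ [y])).reverse
      = y :: (List.replicate (k-1) z ++ [y]) := by
    simp [List.reverse_cons, List.reverse_append, List.reverse_replicate]
  refine ⟨?_, ?_, ?_, ?_⟩
  · by_cases hc : c = y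
    · exact ⟨z, by simp [hm, List.replicate_succ], fun h => hyz (hc ▸ h.symm)⟩
    · exact ⟨y, by simp, fun h => hc h.symm⟩
  · rw [hm, List.replicate_succ]
    exact hpre _
  · intro h
    have h2 := List.reverse_prefix.mpr h
    rw [hrev] at h2
    rw [hm, List.replicate_succ] at h2
    have : ([c,c].reverse : List ℕ) = [c,c] := by simp
    rw [this] at h2
    exact hpre _ h2
  · intro h
    have hcount := h.sublist.count_le c
    rw [List.count_replicate_self] at hcount
    by_cases hcy : c = y
    · subst hcy
      have hcc : (c :: (List.replicate (k-1) z ++ [c])).count c = 2 := by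
        simp [List.count_cons, List.count_append, List.count_replicate, Ne.symm hyz, hyz]
      omega
    · by_cases hcz : c = z
      · subst hcz
        have hcc : (y :: (List.replicate (k-1) c ++ [y])).count c = k - 1 := by
          simp [List.count_cons, List.count_append, List.count_replicate, hyz,
            Ne.symm hcy]
        omega
      · have hmem : c ∈ (y :: (List.replicate (k-1) z ++ [y])) :=
          h.sublist.subset (by simp; omega)
        simp [List.mem_cons, List.mem_append, List.mem_replicate, hcy, hcz] at hmem

lemma piece_alt {k c x z : ℕ} (hk : 3 ≤ k) (hxz : x ≠ z) :
    Piece k c ((List.replicate (k-1) [x,z]).flatten ++ [x]) := by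
  apply piece_of_chain' (by omega) (chain'_alt hxz (k-1))
  by_cases hc : c = x
  · refine ⟨z, ?_, fun h => hxz (hc ▸ h.symm)⟩
    refine List.mem_append_left _ (List.mem_flatten.mpr ⟨[x,z], ?_, by simp⟩)
    exact List.mem_replicate.mpr ⟨by omega, rfl⟩
  · exact ⟨x, by simp, fun h => hc h.symm⟩

lemma piece_altD {k c u v : ℕ} (hk : 3 ≤ k) (huv : u ≠ v) :
    Piece k c ((List.replicate (k-1) [u,v]).flatten) := by
  apply piece_of_chain' (by omega) (chain'_alt' huv (k-1))
  have hmem : ∀ t ∈ [u,v], t ∈ (List.replicate (k-1) [u,v]).flatten := by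
    intro t ht
    exact List.mem_flatten.mpr ⟨[u,v], List.mem_replicate.mpr ⟨by omega, rfl⟩, ht⟩
  by_cases hc : c = u
  · exact ⟨v, hmem v (by simp), fun h => huv (hc ▸ h.symm)⟩
  · exact ⟨u, hmem u (by simp), fun h => hc h.symm⟩

lemma Zf_single {n x y a b z : ℕ} (hz : z = a ∨ z = b) (hzx : z ≠ x) (hzy : z ≠ y)
    (hzr : z ∈ List.range' 1 n)
    (hother : ∀ t, (t = a ∨ t = b) → t ≠ x → t ≠ y → t = z) :
    (gadZ n x y).filter (fun t => decide (t = a ∨ t = b)) = [z] := by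
  rw [gadZ, List.filter_filter]
  have hcongr : ∀ t ∈ List.range' 1 n,
      (decide (t = a ∨ t = b) && decide (t ≠ x ∧ t ≠ y)) = decide (t = z) := by
    intro t _
    rw [← Bool.decide_and, decide_eq_decide]
    constructor
    · rintro ⟨h1, h2, h3⟩; exact hother t h1 h2 h3
    · rintro rfl; exact ⟨hz, hzx, hzy⟩
  rw [List.filter_congr hcongr]
  exact filter_eq_single hzr (List.nodup_range' (s := 1) (n := n))

lemma Zf_nil {n x y a b : ℕ} (hsub : ∀ t, (t = a ∨ t = b) → t = x ∨ t = y) :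
    (gadZ n x y).filter (fun t => decide (t = a ∨ t = b)) = [] := by
  rw [List.filter_eq_nil_iff]
  intro t ht
  simp only [decide_eq_true_eq]
  rintro hab
  rcases hsub t hab with rfl | rfl
  · simp [gadZ] at ht
  · simp [gadZ] at ht

lemma Zf_pair {n x y a b : ℕ} (hab : a ≠ b)
    (hax : a ≠ x) (hay : a ≠ y) (hbx : b ≠ x) (hby : b ≠ y)
    (har : a ∈ List.range' 1 n) (hbr : b ∈ List.range' 1 n) :
    (gadZ n x y).filter (fun t => decide (t = a ∨ t = b)) = [a,b] ∨
    (gadZ n x y).filter (fun t => decide (t = a ∨ t = b)) = [b,a] := by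
  rw [gadZ, List.filter_filter]
  have hcongr : ∀ t ∈ List.range' 1 n,
      (decide (t = a ∨ t = b) && decide (t ≠ x ∧ t ≠ y))
        = decide (t = a ∨ t = b) := by
    intro t _
    rw [← Bool.decide_and, decide_eq_decide]
    constructor
    · exact fun h => h.1
    · rintro (rfl | rfl)
      · exact ⟨Or.inl rfl, hax, hay⟩
      · exact ⟨Or.inr rfl, hbx, hby⟩
  rw [List.filter_congr hcongr]
  exact filter_pair hab har hbr (List.nodup_range' (s := 1) (n := n))

lemma gad_match {k n x y a b : ℕ} (hk : 3 ≤ k) (hxy : x ≠ y)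
    (hxab : x = a ∨ x = b) (hyab : y = a ∨ y = b) :
    List.replicate k x <:+: (gad k n x y).filter (fun z => decide (z = a ∨ z = b)) := by
  have hZ : (gadZ n x y).filter (fun t => decide (t = a ∨ t = b)) = [] := by
    apply Zf_nil
    intro t ht
    rcases hxab with rfl | rfl <;> rcases hyab with h2 | h2 <;>
      rcases ht with rfl | rfl <;> first
        | exact Or.inl rfl
        | (rw [h2]; exact Or.inr rfl)
        | (exact Or.inr h2.symm)
        | (exact Or.inl (by omega))
        | (exact Or.inr (by omega))
  simp only [Bool.decide_or] at hZ
  obtain ⟨m, hm⟩ : ∃ m, k = m + 1 := ⟨k - 1, by omega⟩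
  have hcalc : (gad k n x y).filter (fun z => decide (z = a ∨ z = b))
      = y :: (List.replicate (k-1) x ++ [x, y]) := by
    simp [gad, List.filter_append, List.filter_flatten, List.map_replicate, hZ, hxab, hyab,
      flatten_rep_singleton]
  rw [hcalc]
  refine ⟨[y], [y], ?_⟩
  rw [hm]
  simp only [Nat.add_sub_cancel, List.replicate_succ' (n := m) (a := x)]
  simp

lemma gad_piece_B' {k n x y a b z c : ℕ} (hk : 3 ≤ k)
    (hxab : x = a ∨ x = b) (hyab : ¬(y = a ∨ y = b))
    (hZ : (gadZ n x y).filter (fun t => decide (t = a ∨ t = b)) = [z]) (hxz : x ≠ z) :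
    Piece k c ((gad k n x y).filter (fun t => decide (t = a ∨ t = b))) := by
  simp only [Bool.decide_or] at hZ
  have hcalc : (gad k n x y).filter (fun t => decide (t = a ∨ t = b))
      = (List.replicate (k-1) [x,z]).flatten ++ [x] := by
    simp [gad, List.filter_append, List.filter_flatten, List.map_replicate, hZ, hxab, hyab]
  rw [hcalc]
  exact piece_alt hk hxz

lemma gad_piece_C' {k n x y a b z c : ℕ} (hk : 3 ≤ k)
    (hxab : ¬(x = a ∨ x = b)) (hyab : y = a ∨ y = b)
    (hZ : (gadZ n x y).filter (fun t => decide (t = a ∨ t = b)) = [z]) (hyz : y ≠ z) :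
    Piece k c ((gad k n x y).filter (fun t => decide (t = a ∨ t = b))) := by
  simp only [Bool.decide_or] at hZ
  have hcalc : (gad k n x y).filter (fun t => decide (t = a ∨ t = b))
      = y :: (List.replicate (k-1) z ++ [y]) := by
    simp [gad, List.filter_append, List.filter_flatten, List.map_replicate, hZ, hxab, hyab,
      flatten_rep_singleton]
  rw [hcalc]
  exact piece_yzy hk hyz

lemma gad_piece_D' {k n x y a b c : ℕ} (hk : 3 ≤ k) (hab : a ≠ b)
    (hxab : ¬(x = a ∨ x = b)) (hyab : ¬(y = a ∨ y = b))
    (hax : a ≠ x) (hay : a ≠ y) (hbx : b ≠ x) (hby : b ≠ y)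
    (har : a ∈ List.range' 1 n) (hbr : b ∈ List.range' 1 n) :
    Piece k c ((gad k n x y).filter (fun t => decide (t = a ∨ t = b))) := by
  rcases Zf_pair hab hax hay hbx hby har hbr (x := x) (y := y) with hZ | hZ <;>
    simp only [Bool.decide_or] at hZ
  · have hcalc : (gad k n x y).filter (fun t => decide (t = a ∨ t = b))
        = (List.replicate (k-1) [a,b]).flatten := by
      simp [gad, List.filter_append, List.filter_flatten, List.map_replicate, hZ, hxab, hyab]
    rw [hcalc]
    exact piece_altD hk hab
  · have hcalc : (gad k n x y).filter (fun t => decide (t = a ∨ t = b))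
        = (List.replicate (k-1) [b,a]).flatten := by
      simp [gad, List.filter_append, List.filter_flatten, List.map_replicate, hZ, hxab, hyab]
    rw [hcalc]
    exact piece_altD hk hab.symm

lemma gad_piece_B {k n x y a b c : ℕ} (hk : 3 ≤ k) (hab : a ≠ b)
    (hxab : x = a ∨ x = b) (hyab : ¬(y = a ∨ y = b))
    (har : a ∈ List.range' 1 n) (hbr : b ∈ List.range' 1 n) :
    Piece k c ((gad k n x y).filter (fun t => decide (t = a ∨ t = b))) := by
  rcases hxab with h | h
  · refine gad_piece_B' hk (Or.inl h) hyab (z := b) ?_ (by rw [h]; exact hab)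
    refine Zf_single (Or.inr rfl) (by rw [h]; exact Ne.symm hab)
      (fun hby => hyab (Or.inr hby.symm)) hbr ?_
    rintro t (rfl | rfl) htx hty
    · exact absurd h.symm htx
    · rfl
  · refine gad_piece_B' hk (Or.inr h) hyab (z := a) ?_ (by rw [h]; exact Ne.symm hab)
    refine Zf_single (Or.inl rfl) (by rw [h]; exact hab)
      (fun hay => hyab (Or.inl hay.symm)) har ?_
    rintro t (rfl | rfl) htx hty
    · rfl
    · exact absurd h.symm htx

lemma gad_piece_C {k n x y a b c : ℕ} (hk : 3 ≤ k) (hab : a ≠ b)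
    (hxab : ¬(x = a ∨ x = b)) (hyab : y = a ∨ y = b)
    (har : a ∈ List.range' 1 n) (hbr : b ∈ List.range' 1 n) :
    Piece k c ((gad k n x y).filter (fun t => decide (t = a ∨ t = b))) := by
  rcases hyab with h | h
  · refine gad_piece_C' hk hxab (Or.inl h) (z := b) ?_ (by rw [h]; exact hab)
    refine Zf_single (Or.inr rfl) (fun hbx => hxab (Or.inr hbx.symm))
      (by rw [h]; exact Ne.symm hab) hbr ?_
    rintro t (rfl | rfl) htx hty
    · exact absurd h.symm hty
    · rfl
  · refine gad_piece_C' hk hxab (Or.inr h) (z := a) ?_ (by rw [h]; exact Ne.symm hab)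
    refine Zf_single (Or.inl rfl) (fun hax => hxab (Or.inl hax.symm))
      (by rw [h]; exact hab) har ?_
    rintro t (rfl | rfl) htx hty
    · rfl
    · exact absurd h.symm hty

lemma base_piece {k n a b c : ℕ} (hk : 3 ≤ k) (hab : a ≠ b)
    (har : a ∈ List.range' 1 n) (hbr : b ∈ List.range' 1 n) :
    Piece k c ((List.range' 1 n).filter (fun t => decide (t = a ∨ t = b))) := by
  apply piece_of_chain' (by omega)
  · exact List.Pairwise.isChain ((List.nodup_range' (s := 1) (n := n)).filter _)
  · by_cases hc : c = a
    · exact ⟨b, List.mem_filter.mpr ⟨hbr, by simp⟩, fun hh => hab (hc ▸ hh.symm)⟩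
    · exact ⟨a, List.mem_filter.mpr ⟨har, by simp⟩, fun hh => hc hh.symm⟩

lemma gad_subset {k n x y t : ℕ} (ht : t ∈ gad k n x y) :
    t = x ∨ t = y ∨ t ∈ List.range' 1 n := by
  rw [gad] at ht
  rcases List.mem_cons.mp ht with rfl | ht'
  · exact Or.inr (Or.inl rfl)
  rcases List.mem_append.mp ht' with h | h
  · obtain ⟨l, hl, htl⟩ := List.mem_flatten.mp h
    rw [(List.eq_of_mem_replicate hl : l = x :: gadZ n x y)] at htl
    rcases List.mem_cons.mp htl with rfl | h2
    · exact Or.inl rfl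
    · exact Or.inr (Or.inr (List.mem_of_mem_filter h2))
  · rcases List.mem_cons.mp h with rfl | h2
    · exact Or.inl rfl
    · simp at h2
      exact Or.inr (Or.inl h2)

lemma word_mem {k n : ℕ} {ps : List (ℕ × ℕ)}
    (hps : ∀ q ∈ ps, q.1 ∈ List.range' 1 n ∧ q.2 ∈ List.range' 1 n) (t : ℕ) :
    t ∈ word k n ps ↔ t ∈ List.range' 1 n := by
  constructor
  · intro h
    rcases List.mem_append.mp h with h | h
    · exact h
    · obtain ⟨l, hl, htl⟩ := List.mem_flatten.mp h
      obtain ⟨q, hq, rfl⟩ := List.mem_map.mp hl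
      obtain ⟨h1, h2⟩ := hps q hq
      rcases gad_subset htl with rfl | rfl | h3
      · exact h1
      · exact h2
      · exact h3
  · intro h
    exact List.mem_append.mpr (Or.inl h)

lemma word_filter_eq {k n : ℕ} (ps : List (ℕ × ℕ)) (p : ℕ → Bool) :
    (word k n ps).filter p =
      (((List.range' 1 n).filter p) ::
        (ps.map (fun q => (gad k n q.1 q.2).filter p))).flatten := by
  simp [word, List.filter_append, List.filter_flatten, List.map_map, Function.comp_def]

/-- for any fixed `k ≥ 3`, every labeled graph `G = ([n], E)` is
`1^k`-representable. -/
theorem every_graph_one_pow_k_representable (k : ℕ) (hk : 3 ≤ k)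
    (n : ℕ) (E : ℕ → ℕ → Prop) (hsym : Symmetric E) (hirr : ∀ x, ¬ E x x)
    (hsupp : ∀ x y, E x y → x ∈ Finset.Icc 1 n ∧ y ∈ Finset.Icc 1 n) :
    ∃ w, Represents (List.replicate k 1) w (Finset.Icc 1 n) E := by

  classical
  have hIcc : ∀ t : ℕ, t ∈ List.range' 1 n ↔ t ∈ Finset.Icc 1 n := by
    intro t
    rw [List.mem_range'_1, Finset.mem_Icc]
    omega
  set PS : Finset (ℕ × ℕ) :=
    (Finset.Icc 1 n ×ˢ Finset.Icc 1 n).filter (fun q => q.1 < q.2 ∧ ¬ E q.1 q.2) with hPS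
  set ps := PS.toList with hpsdef
  have hpsmem : ∀ q ∈ ps, q.1 ∈ List.range' 1 n ∧ q.2 ∈ List.range' 1 n
      ∧ q.1 ≠ q.2 ∧ ¬ E q.1 q.2 := by
    intro q hq
    rw [hpsdef, Finset.mem_toList, hPS, Finset.mem_filter, Finset.mem_product] at hq
    exact ⟨(hIcc _).mpr hq.1.1, (hIcc _).mpr hq.1.2, Nat.ne_of_lt hq.2.1, hq.2.2⟩
  have hpscompl : ∀ a b : ℕ, a ∈ Finset.Icc 1 n → b ∈ Finset.Icc 1 n → a ≠ b →
      ¬ E a b → (a, b) ∈ ps ∨ (b, a) ∈ ps := by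
    intro a b ha hb hab hne
    rcases Nat.lt_or_ge a b with h | h
    · left
      rw [hpsdef, Finset.mem_toList, hPS, Finset.mem_filter, Finset.mem_product]
      exact ⟨⟨ha, hb⟩, h, hne⟩
    · right
      rw [hpsdef, Finset.mem_toList, hPS, Finset.mem_filter, Finset.mem_product]
      exact ⟨⟨hb, ha⟩, by omega, fun hE => hne (hsym hE)⟩
  refine ⟨word k n ps, ?_, ?_⟩
  · intro t
    rw [word_mem (fun q hq => ⟨(hpsmem q hq).1, (hpsmem q hq).2.1⟩)]
    exact hIcc t
  · intro a ha b hb hab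
    constructor
    · intro hE hM
      rw [hasMatch_iff (by omega)] at hM
      obtain ⟨c, hc⟩ := hM
      rw [word_filter_eq] at hc
      refine no_rep_flatten hk ?_ hc
      intro P hP
      rcases List.mem_cons.mp hP with rfl | hP'
      · exact base_piece hk hab ((hIcc a).mpr ha) ((hIcc b).mpr hb)
      · obtain ⟨q, hq, rfl⟩ := List.mem_map.mp hP'
        obtain ⟨h1r, h2r, hne, hnE⟩ := hpsmem q hq
        by_cases h1 : q.1 = a ∨ q.1 = b <;> by_cases h2 : q.2 = a ∨ q.2 = b
        · exfalso
          rcases h1 with h1' | h1' <;> rcases h2 with h2' | h2'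
          · exact hne (h1'.trans h2'.symm)
          · exact hnE (by rw [h1', h2']; exact hE)
          · exact hnE (by rw [h1', h2']; exact hsym hE)
          · exact hne (h1'.trans h2'.symm)
        · exact gad_piece_B hk hab h1 h2 ((hIcc a).mpr ha) ((hIcc b).mpr hb)
        · exact gad_piece_C hk hab h1 h2 ((hIcc a).mpr ha) ((hIcc b).mpr hb)
        · push_neg at h1 h2
          exact gad_piece_D' hk hab (by tauto) (by tauto)
            (Ne.symm h1.1) (Ne.symm h2.1) (Ne.symm h1.2) (Ne.symm h2.2)
            ((hIcc a).mpr ha) ((hIcc b).mpr hb)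
    · intro hNM
      by_contra hnE
      apply hNM
      rw [hasMatch_iff (by omega)]
      rcases hpscompl a b ha hb hab hnE with hm | hm
      · refine ⟨a, (gad_match (n := n) hk hab (Or.inl rfl) (Or.inr rfl)).trans ?_⟩
        rw [word_filter_eq]
        apply List.infix_of_mem_flatten
        exact List.mem_cons.mpr (Or.inr (List.mem_map.mpr ⟨(a,b), hm, rfl⟩))
      · refine ⟨b, (gad_match (n := n) hk (Ne.symm hab) (Or.inr rfl) (Or.inl rfl)).trans ?_⟩
        rw [word_filter_eq]
        apply List.infix_of_mem_flatten
        exact List.mem_cons.mpr (Or.inr (List.mem_map.mpr ⟨(b,a), hm, rfl⟩))
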